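/- Let $d \geq 2$, $\alpha \in (0,1)$, $s \in (1-\alpha, 1)$, and fix $\xi \in \mathbb{R}^d$ with $|\xi| > 1$. Set $D_2 = \{\eta \in \mathbb{R}^d : |\eta - \xi| > |\xi|/2, \ |\eta| \leq |\xi|/2\}$. Then there is a constant $C$ (depending on $d,\alpha,s$ only) such that $\int_{D_2} \frac{|\xi|^2}{(1+|\xi-\eta|^2)^{d/2+\alpha}|\eta|^{2s}} d\eta + \int_{D_2} \frac{|\xi|^{2-2s}}{(1+|\xi-\eta|^2)^{d/2+\alpha}} d\eta \leq C$. -/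
import Mathlib

open MeasureTheory ENNReal Real Set Metric

lemma shell_cover {E : Type*} [NormedAddCommGroup E] {R : ℝ}
    {η : E} (h1 : ‖η‖ ≤ R) (h2 : η ≠ 0) :
    ∃ n : ℕ, ‖η‖ ≤ R / 2 ^ n ∧ R / 2 ^ (n + 1) < ‖η‖ := by
  have hq : 0 < ‖η‖ := norm_pos_iff.mpr h2
  have hex : ∃ n : ℕ, R / 2 ^ (n + 1) < ‖η‖ := by
    obtain ⟨n, hn⟩ := pow_unbounded_of_one_lt (R / ‖η‖) (one_lt_two (α := ℝ))
    refine ⟨n, ?_⟩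
    rw [div_lt_iff₀ (by positivity)] at hn ⊢
    calc R < ‖η‖ * 2 ^ n := by linarith [hn]
      _ ≤ ‖η‖ * 2 ^ (n + 1) := by
          have h2n : (2:ℝ) ^ n ≤ 2 ^ (n+1) := by
            apply pow_le_pow_right₀ one_le_two (Nat.le_succ n)
          nlinarith
  classical
  refine ⟨Nat.find hex, ?_, Nat.find_spec hex⟩
  rcases Nat.eq_zero_or_pos (Nat.find hex) with h0 | hpos
  · simpa [h0] using h1
  · obtain ⟨m, hm⟩ := Nat.exists_eq_succ_of_ne_zero hpos.ne'
    have := Nat.find_min hex (by omega : m < Nat.find hex)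
    rw [hm]
    exact le_of_not_gt this

lemma ball_rpow_lintegral_le (d : ℕ) (hd : 1 ≤ d) (p : ℝ) (hp : 0 < p) (hpd : p < d) :
    ∃ K : ℝ≥0∞, K ≠ ⊤ ∧ ∀ R : ℝ, 0 < R →
      ∫⁻ η in closedBall (0 : EuclideanSpace ℝ (Fin d)) R, ENNReal.ofReal (‖η‖ ^ (-p)) ≤
        K * ENNReal.ofReal (R ^ ((d : ℝ) - p)) := by
  set E := EuclideanSpace ℝ (Fin d)
  set mB : ℝ≥0∞ := volume (ball (0 : E) 1) with hmB
  set r : ℝ := (2:ℝ) ^ (p - (d:ℝ)) with hrdef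
  have hr0 : 0 < r := rpow_pos_of_pos two_pos _
  have hr1 : r < 1 := rpow_lt_one_of_one_lt_of_neg one_lt_two (by
    have : (1:ℝ) ≤ d := by exact_mod_cast hd
    linarith)
  have hmBtop : mB ≠ ⊤ := measure_ball_lt_top.ne
  refine ⟨ENNReal.ofReal ((2:ℝ) ^ p) * ((1 - ENNReal.ofReal r)⁻¹ * mB), ?_, ?_⟩
  · refine ENNReal.mul_ne_top ofReal_ne_top (ENNReal.mul_ne_top ?_ hmBtop)
    rw [ENNReal.inv_ne_top]
    simp only [ne_eq, tsub_eq_zero_iff_le, not_le]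
    exact ENNReal.ofReal_lt_one.mpr hr1
  intro R hR
  set A : ℕ → Set E := fun n => {η : EuclideanSpace ℝ (Fin d) | ‖η‖ ≤ R / 2 ^ n ∧ R / 2 ^ (n + 1) < ‖η‖} with hA
  have hAmeas : ∀ n, MeasurableSet (A n) := by
    intro n
    apply MeasurableSet.inter
    · exact measurableSet_le measurable_norm measurable_const
    · exact measurableSet_lt measurable_const measurable_norm
  have hsub : (closedBall (0:EuclideanSpace ℝ (Fin d)) R) \ ({0} : Set (EuclideanSpace ℝ (Fin d))) ⊆ ⋃ n, A n := by
    intro η hη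
    obtain ⟨n, h1, h2⟩ := shell_cover (by simpa using hη.1) (by simpa using hη.2)
    exact Set.mem_iUnion.mpr ⟨n, h1, h2⟩
  haveI : Nontrivial (EuclideanSpace ℝ (Fin d)) := by
    have : 0 < Module.finrank ℝ E := by
      rw [show Module.finrank ℝ E = d from finrank_euclideanSpace_fin]; omega
    exact Module.nontrivial_of_finrank_pos this
  have hae : (closedBall (0:EuclideanSpace ℝ (Fin d)) R : Set (EuclideanSpace ℝ (Fin d))) =ᵐ[volume] (closedBall (0:EuclideanSpace ℝ (Fin d)) R) \ ({0} : Set (EuclideanSpace ℝ (Fin d))) := by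
    refine (MeasureTheory.diff_ae_eq_self.mpr ?_).symm
    have h0 : volume ({0} : Set (EuclideanSpace ℝ (Fin d))) = 0 := measure_singleton _
    first
    | exact measure_mono_null Set.inter_subset_left h0
    | exact measure_mono_null Set.inter_subset_right h0
  calc ∫⁻ η in closedBall (0:EuclideanSpace ℝ (Fin d)) R, ENNReal.ofReal (‖η‖ ^ (-p))
      = ∫⁻ η in (closedBall (0:EuclideanSpace ℝ (Fin d)) R) \ ({0} : Set (EuclideanSpace ℝ (Fin d))), ENNReal.ofReal (‖η‖ ^ (-p)) :=
        setLIntegral_congr hae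
    _ ≤ ∫⁻ η in ⋃ n, A n, ENNReal.ofReal (‖η‖ ^ (-p)) := lintegral_mono_set hsub
    _ ≤ ∑' n, ∫⁻ η in A n, ENNReal.ofReal (‖η‖ ^ (-p)) := lintegral_iUnion_le _ _
    _ ≤ ∑' n, ENNReal.ofReal (R ^ ((d:ℝ) - p) * (2:ℝ) ^ p * r ^ n) * mB := by
        refine ENNReal.tsum_le_tsum fun n => ?_
        have hb : (0:ℝ) < R / 2 ^ (n+1) := by positivity
        have step1 : ∫⁻ η in A n, ENNReal.ofReal (‖η‖ ^ (-p)) ≤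
            ∫⁻ _ in A n, ENNReal.ofReal ((R / 2 ^ (n+1)) ^ (-p)) := by
          refine setLIntegral_mono' (hAmeas n) fun η hη => ?_
          refine ENNReal.ofReal_le_ofReal ?_
          exact rpow_le_rpow_of_nonpos hb hη.2.le (neg_nonpos.mpr hp.le)
        have step2 : volume (A n) ≤ ENNReal.ofReal ((R / 2 ^ n) ^ (d:ℕ)) * mB := by
          have : A n ⊆ closedBall (0:E) (R / 2 ^ n) := fun η hη => by
            simpa [mem_closedBall, dist_zero_right] using hη.1
          refine (measure_mono this).trans_eq ?_
          rw [Measure.addHaar_closedBall _ _ (by positivity)]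
          rw [show Module.finrank ℝ E = d from finrank_euclideanSpace_fin]
        have key : (R / 2 ^ (n+1)) ^ (-p) * (R / 2 ^ n) ^ (d:ℕ) =
            R ^ ((d:ℝ) - p) * (2:ℝ) ^ p * r ^ n := by
          have h2n : ((2:ℝ) ^ n) = (2:ℝ) ^ (n:ℝ) := by
            rw [← Real.rpow_natCast]
          have h2n1 : ((2:ℝ) ^ (n+1)) = (2:ℝ) ^ ((n:ℝ)+1) := by
            rw [← Real.rpow_natCast]; push_cast; ring_nf
          have hrn : r ^ n = (2:ℝ) ^ ((p - (d:ℝ)) * n) := by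
            rw [hrdef, ← Real.rpow_natCast ((2:ℝ) ^ (p - (d:ℝ))) n, ← Real.rpow_mul two_pos.le]
          have hRd : (R / 2 ^ n) ^ (d:ℕ) = (R / 2 ^ n) ^ (d:ℝ) := by
            rw [← Real.rpow_natCast]
          rw [hRd, hrn, div_rpow hR.le (by positivity), div_rpow hR.le (by positivity),
            h2n, h2n1]
          rw [← Real.rpow_mul two_pos.le, ← Real.rpow_mul two_pos.le]
          rw [div_mul_div_comm, ← Real.rpow_add hR, ← Real.rpow_add two_pos,
            div_eq_mul_inv, ← Real.rpow_neg two_pos.le,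
            mul_assoc (R ^ ((d:ℝ) - p)), ← Real.rpow_add two_pos]
          congr 1
          · congr 1; ring
          · congr 1; ring
        calc ∫⁻ η in A n, ENNReal.ofReal (‖η‖ ^ (-p))
            ≤ ENNReal.ofReal ((R / 2 ^ (n+1)) ^ (-p)) * volume (A n) := by
              rw [← setLIntegral_const]; exact step1
          _ ≤ ENNReal.ofReal ((R / 2 ^ (n+1)) ^ (-p)) *
                (ENNReal.ofReal ((R / 2 ^ n) ^ (d:ℕ)) * mB) := by gcongr
          _ = ENNReal.ofReal (R ^ ((d:ℝ) - p) * (2:ℝ) ^ p * r ^ n) * mB := by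
              rw [← mul_assoc, ← ENNReal.ofReal_mul (by positivity), key]
    _ = ENNReal.ofReal ((2:ℝ) ^ p) * ((1 - ENNReal.ofReal r)⁻¹ * mB) *
          ENNReal.ofReal (R ^ ((d:ℝ) - p)) := by
        have : ∀ n : ℕ, ENNReal.ofReal (R ^ ((d:ℝ) - p) * (2:ℝ) ^ p * r ^ n) * mB =
            (ENNReal.ofReal (R ^ ((d:ℝ) - p)) * ENNReal.ofReal ((2:ℝ) ^ p) * mB) *
              ENNReal.ofReal r ^ n := by
          intro n
          rw [ENNReal.ofReal_mul (by positivity), ENNReal.ofReal_mul (by positivity),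
            ENNReal.ofReal_pow hr0.le]
          ring
        simp_rw [this]
        rw [ENNReal.tsum_mul_left, ENNReal.tsum_geometric]
        ring

theorem stmt8 (d : ℕ) (hd : 2 ≤ d) (α s : ℝ) (hα : α ∈ Set.Ioo (0 : ℝ) 1)
    (hs : s ∈ Set.Ioo (1 - α) 1) :
    ∃ C : ℝ, 0 < C ∧
      ∀ ξ : EuclideanSpace ℝ (Fin d), 1 < ‖ξ‖ →
        (∫⁻ η in {η : EuclideanSpace ℝ (Fin d) | ‖η - ξ‖ > ‖ξ‖ / 2 ∧ ‖η‖ ≤ ‖ξ‖ / 2},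
            ENNReal.ofReal (‖ξ‖ ^ 2 /
              ((1 + ‖ξ - η‖ ^ 2) ^ ((d : ℝ) / 2 + α) * ‖η‖ ^ (2 * s)))) +
        (∫⁻ η in {η : EuclideanSpace ℝ (Fin d) | ‖η - ξ‖ > ‖ξ‖ / 2 ∧ ‖η‖ ≤ ‖ξ‖ / 2},
            ENNReal.ofReal (‖ξ‖ ^ (2 - 2 * s) /
              (1 + ‖ξ - η‖ ^ 2) ^ ((d : ℝ) / 2 + α))) ≤
        ENNReal.ofReal C := by
  obtain ⟨hα0, hα1⟩ := hα
  obtain ⟨hs0, hs1⟩ := hs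
  have hs0' : 0 < s := by linarith
  set e : ℝ := (d : ℝ) / 2 + α with hedef
  have hd2 : (2:ℝ) ≤ (d:ℝ) := by exact_mod_cast hd
  have he : 0 < e := by simp only [hedef]; linarith
  have hp : 0 < 2 * s := by linarith
  have hpd : 2 * s < (d:ℝ) := by linarith
  obtain ⟨K, hKtop, hK⟩ := ball_rpow_lintegral_le d (by omega) (2 * s) hp hpd
  set M : ℝ := (4:ℝ) ^ e * (2:ℝ) ^ (2 * s - (d:ℝ)) with hMdef
  have hM : 0 < M := by positivity
  set B : ℝ≥0∞ := 2 * (ENNReal.ofReal M * K) with hBdef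
  have hBtop : B ≠ ⊤ := by
    simp only [hBdef]
    exact ENNReal.mul_ne_top (by simp) (ENNReal.mul_ne_top ofReal_ne_top hKtop)
  refine ⟨B.toReal + 1, by positivity, ?_⟩
  intro ξ hξ
  have hξ0 : 0 < ‖ξ‖ := by linarith
  set R : ℝ := ‖ξ‖ / 2 with hRdef
  have hR : 0 < R := by positivity
  set S : Set (EuclideanSpace ℝ (Fin d)) := {η : EuclideanSpace ℝ (Fin d) | ‖η - ξ‖ > ‖ξ‖ / 2 ∧ ‖η‖ ≤ ‖ξ‖ / 2} with hSdef
  have hSmeas : MeasurableSet S := by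
    have : S = {η : EuclideanSpace ℝ (Fin d) | ‖ξ‖ / 2 < ‖η - ξ‖} ∩ {η : EuclideanSpace ℝ (Fin d) | ‖η‖ ≤ ‖ξ‖ / 2} := by
      ext η; simp only [Set.mem_setOf_eq, Set.mem_inter_iff, hSdef, gt_iff_lt]
    rw [this]
    exact (measurableSet_lt measurable_const
      ((measurable_id.sub measurable_const).norm)).inter
      (measurableSet_le measurable_norm measurable_const)
  set T : Set (EuclideanSpace ℝ (Fin d)) := S \ {0} with hTdef
  have hTmeas : MeasurableSet T := hSmeas.diff (measurableSet_singleton 0)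
  haveI : Nontrivial (EuclideanSpace ℝ (Fin d)) := by
    have : 0 < Module.finrank ℝ (EuclideanSpace ℝ (Fin d)) := by
      rw [show Module.finrank ℝ (EuclideanSpace ℝ (Fin d)) = d from finrank_euclideanSpace_fin]
      omega
    exact Module.nontrivial_of_finrank_pos this
  have hae : (S : Set (EuclideanSpace ℝ (Fin d))) =ᵐ[volume] T := by
    refine (MeasureTheory.diff_ae_eq_self.mpr ?_).symm
    have h0 : volume ({0} : Set (EuclideanSpace ℝ (Fin d))) = 0 := measure_singleton _
    first
    | exact measure_mono_null Set.inter_subset_left h0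
    | exact measure_mono_null Set.inter_subset_right h0
  have hTball : T ⊆ closedBall (0:EuclideanSpace ℝ (Fin d)) R := by
    intro η hη
    simpa [mem_closedBall, dist_zero_right, hRdef] using hη.1.2
  set cξ : ℝ := (4:ℝ) ^ e * ‖ξ‖ ^ (2 - 2 * e) with hcdef
  have hc : 0 < cξ := mul_pos (Real.rpow_pos_of_pos (by norm_num) e)
    (Real.rpow_pos_of_pos hξ0 _)
  -- pointwise bounds on T
  have hptA : ∀ η ∈ T, ‖ξ‖ ^ 2 / ((1 + ‖ξ - η‖ ^ 2) ^ e * ‖η‖ ^ (2 * s)) ≤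
      cξ * ‖η‖ ^ (-(2 * s)) := by
    intro η hη
    have hη0 : (0:ℝ) < ‖η‖ := norm_pos_iff.mpr (by simpa using hη.2)
    have h1 : ‖ξ‖ / 2 < ‖ξ - η‖ := by rw [norm_sub_rev]; exact hη.1.1
    have hbase : ‖ξ‖ ^ 2 / 4 ≤ 1 + ‖ξ - η‖ ^ 2 := by
      have h2 : (‖ξ‖ / 2) ^ 2 ≤ ‖ξ - η‖ ^ 2 :=
        pow_le_pow_left₀ (by positivity) h1.le 2
      nlinarith
    have hDlow : ‖ξ‖ ^ (2 * e) / (4:ℝ) ^ e ≤ (1 + ‖ξ - η‖ ^ 2) ^ e := by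
      have h1' : ((‖ξ‖ ^ 2 / 4) : ℝ) ^ e ≤ (1 + ‖ξ - η‖ ^ 2) ^ e :=
        Real.rpow_le_rpow (by positivity) hbase he.le
      refine le_trans (le_of_eq ?_) h1'
      rw [div_rpow (by positivity) (by norm_num), ← Real.rpow_natCast ‖ξ‖ 2,
        ← Real.rpow_mul (norm_nonneg ξ)]
      norm_num
    have hstep : ‖ξ‖ ^ 2 / ((1 + ‖ξ - η‖ ^ 2) ^ e * ‖η‖ ^ (2 * s)) ≤
        ‖ξ‖ ^ 2 / ((‖ξ‖ ^ (2 * e) / (4:ℝ) ^ e) * ‖η‖ ^ (2 * s)) := by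
      refine div_le_div_of_nonneg_left (by positivity) (by positivity) ?_
      exact mul_le_mul_of_nonneg_right hDlow (by positivity)
    refine hstep.trans (le_of_eq ?_)
    rw [hcdef, Real.rpow_neg (norm_nonneg η), Real.rpow_sub hξ0,
      ← Real.rpow_natCast ‖ξ‖ 2]
    have h4 : ((4:ℝ)) ^ e ≠ 0 := by positivity
    have hξe : ‖ξ‖ ^ (2 * e) ≠ 0 := by positivity
    have hηs : ‖η‖ ^ (2 * s) ≠ 0 := by positivity
    field_simp
    push_cast
    ring
  have hptB : ∀ η ∈ T, ‖ξ‖ ^ (2 - 2 * s) / (1 + ‖ξ - η‖ ^ 2) ^ e ≤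
      cξ * ‖η‖ ^ (-(2 * s)) := by
    intro η hη
    have hη0 : (0:ℝ) < ‖η‖ := norm_pos_iff.mpr (by simpa using hη.2)
    have hηξ : ‖η‖ ≤ ‖ξ‖ := le_trans hη.1.2 (by linarith)
    refine le_trans ?_ (hptA η hη)
    have hnum : ‖ξ‖ ^ (2 - 2 * s) ≤ ‖ξ‖ ^ 2 / ‖η‖ ^ (2 * s) := by
      rw [Real.rpow_sub hξ0, ← Real.rpow_natCast ‖ξ‖ 2]
      push_cast
      refine div_le_div_of_nonneg_left (by positivity) (by positivity) ?_
      exact Real.rpow_le_rpow hη0.le hηξ hp.le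
    calc ‖ξ‖ ^ (2 - 2 * s) / (1 + ‖ξ - η‖ ^ 2) ^ e
        ≤ (‖ξ‖ ^ 2 / ‖η‖ ^ (2 * s)) / (1 + ‖ξ - η‖ ^ 2) ^ e := by
          have hD : (0:ℝ) < (1 + ‖ξ - η‖ ^ 2) ^ e :=
            Real.rpow_pos_of_pos (by positivity) e
          gcongr
      _ = ‖ξ‖ ^ 2 / ((1 + ‖ξ - η‖ ^ 2) ^ e * ‖η‖ ^ (2 * s)) := by
          rw [div_div, mul_comm]
  -- the common bound for each integral
  have hbound : ∀ f : EuclideanSpace ℝ (Fin d) → ℝ, (∀ η ∈ T, f η ≤ cξ * ‖η‖ ^ (-(2 * s))) →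
      ∫⁻ η in S, ENNReal.ofReal (f η) ≤ ENNReal.ofReal M * K := by
    intro f hf
    calc ∫⁻ η in S, ENNReal.ofReal (f η)
        = ∫⁻ η in T, ENNReal.ofReal (f η) := setLIntegral_congr hae
      _ ≤ ∫⁻ η in T, ENNReal.ofReal (cξ * ‖η‖ ^ (-(2 * s))) := by
          exact setLIntegral_mono' hTmeas fun η hη => ENNReal.ofReal_le_ofReal (hf η hη)
      _ ≤ ∫⁻ η in closedBall (0:EuclideanSpace ℝ (Fin d)) R, ENNReal.ofReal (cξ * ‖η‖ ^ (-(2 * s))) :=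
          lintegral_mono_set hTball
      _ = ENNReal.ofReal cξ * ∫⁻ η in closedBall (0:EuclideanSpace ℝ (Fin d)) R, ENNReal.ofReal (‖η‖ ^ (-(2 * s))) := by
          simp_rw [ENNReal.ofReal_mul hc.le]
          exact lintegral_const_mul' _ _ ofReal_ne_top
      _ ≤ ENNReal.ofReal cξ * (K * ENNReal.ofReal (R ^ ((d:ℝ) - 2 * s))) := by
          gcongr
          exact hK R hR
      _ = ENNReal.ofReal (cξ * R ^ ((d:ℝ) - 2 * s)) * K := by
          rw [ENNReal.ofReal_mul hc.le]; ring
      _ ≤ ENNReal.ofReal M * K := by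
          gcongr
          have key : cξ * R ^ ((d:ℝ) - 2 * s) = M * ‖ξ‖ ^ (2 - 2 * α - 2 * s) := by
            have hmerge : ‖ξ‖ ^ (2 - (d:ℝ) - 2*α) * ‖ξ‖ ^ ((d:ℝ) - 2*s) =
                ‖ξ‖ ^ (2 - 2*α - 2*s) := by
              rw [← Real.rpow_add hξ0]; congr 1; ring
            rw [hcdef, hMdef, hRdef, div_rpow (norm_nonneg ξ) two_pos.le, div_eq_mul_inv,
              ← Real.rpow_neg two_pos.le,
              show -((d:ℝ) - 2*s) = 2*s - (d:ℝ) by ring,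
              show (2:ℝ) - 2*e = 2 - (d:ℝ) - 2*α by rw [hedef]; ring,
              mul_assoc ((4:ℝ)^e), ← mul_assoc (‖ξ‖ ^ (2 - (d:ℝ) - 2*α)), hmerge]
            ring
          rw [key]
          have : ‖ξ‖ ^ (2 - 2 * α - 2 * s) ≤ 1 :=
            Real.rpow_le_one_of_one_le_of_nonpos hξ.le (by linarith)
          nlinarith
  have hA := hbound _ (fun η hη => hptA η hη)
  have hB := hbound _ (fun η hη => hptB η hη)
  calc _ ≤ ENNReal.ofReal M * K + ENNReal.ofReal M * K := add_le_add hA hB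
    _ = B := by rw [hBdef]; ring
    _ ≤ ENNReal.ofReal (B.toReal + 1) := by
        rw [← ENNReal.ofReal_toReal hBtop]
        exact ENNReal.ofReal_le_ofReal (by
          simp only [ENNReal.toReal_ofReal ENNReal.toReal_nonneg]; linarith)
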